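/- arXiv:0903.1689 — 6 statements merged into one kernel-verified Lean document; each statement's English description precedes it below -/
import Mathlib

section
/- The set T(t) of twin Laurent polynomials is a (non-commutative) subring of L: it contains 0 and 1 (the constant polynomial I), and is closed under addition, negation, and multiplication. -/
/-- The image of (123) under the irreducible 3-dimensional integral representation of A₄. -/
def Xm : Matrix (Fin 3) (Fin 3) ℤ := !![-1, 1, 0; -1, 0, 0; -1, 0, 1]

/-- The image of (142) under the irreducible 3-dimensional integral representation of A₄. -/
def Ym : Matrix (Fin 3) (Fin 3) ℤ := !![0, 0, -1; 0, 1, -1; 1, 0, -1]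

/-- The inverse of `Xm`, which equals `Xm ^ 2`. -/
def Xinv : Matrix (Fin 3) (Fin 3) ℤ := Xm ^ 2

/-- The inverse of `Ym`, which equals `Ym ^ 2`. -/
def Yinv : Matrix (Fin 3) (Fin 3) ℤ := Ym ^ 2

open LaurentPolynomial Finset

/-- 3×3 integer matrices. -/
abbrev M3 : Type := Matrix (Fin 3) (Fin 3) ℤ

/-- Laurent polynomials in `t` with coefficients in `M3`. -/
abbrev L : Type := LaurentPolynomial M3

/-- A Laurent polynomial `f = ∑ d_j t^j` with 3×3 integer matrix coefficients is *twin* if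
`d_j = c_j I + c_j' (XYX)` for `j ≡ 0 (mod 3)`, `d_j = a_j (X+Y)` for `j ≡ 1 (mod 3)`,
`d_j = b_j (X⁻¹+Y⁻¹)` for `j ≡ 2 (mod 3)`, and `a_{3j+1} = b_{3j+2}` for all `j`. -/
def IsTwin (f : L) : Prop :=
  ∃ c c' a b : ℤ → ℤ,
    (∀ j : ℤ, j % 3 = 0 → f.coeff j = c j • (1 : M3) + c' j • (Xm * Ym * Xm)) ∧
    (∀ j : ℤ, j % 3 = 1 → f.coeff j = a j • (Xm + Ym)) ∧
    (∀ j : ℤ, j % 3 = 2 → f.coeff j = b j • (Xinv + Yinv)) ∧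
    (∀ j : ℤ, a (3 * j + 1) = b (3 * j + 2))

/-! ### Auxiliary definitions and lemmas -/

/-- Shorthand for the matrix `XYX`. -/
def Rm : M3 := Xm * Ym * Xm
/-- Shorthand for the matrix `X+Y`. -/
def Pm : M3 := Xm + Ym
/-- Shorthand for the matrix `X⁻¹+Y⁻¹`. -/
def Qm : M3 := Xinv + Yinv

lemma hRR : Rm * Rm = 1 := by decide
lemma hRP : Rm * Pm = -Pm := by decide
lemma hPR : Pm * Rm = -Pm := by decide
lemma hRQ : Rm * Qm = -Qm := by decide
lemma hQR : Qm * Rm = -Qm := by decide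
lemma hPP : Pm * Pm = 0 := by decide
lemma hQQ : Qm * Qm = 0 := by decide
lemma hPQQP : Pm * Qm + Qm * Pm = (2:ℤ) • (1:M3) + (-2:ℤ) • Rm := by decide

/-- Generator `t^{3n}`. -/
noncomputable def Eg (n : ℤ) : L := AddMonoidAlgebra.single (3*n) (1 : M3)
/-- Generator `R t^{3n}`. -/
noncomputable def Fg (n : ℤ) : L := AddMonoidAlgebra.single (3*n) Rm
/-- Generator `P t^{3n+1} + Q t^{3n+2}`. -/
noncomputable def Gg (n : ℤ) : L :=
  AddMonoidAlgebra.single (3*n+1) Pm + AddMonoidAlgebra.single (3*n+2) Qm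

/-- The generating set of twin polynomials. -/
def genSet : Set L := {x | ∃ n : ℤ, x = Eg n ∨ x = Fg n ∨ x = Gg n}

/-- The additive subgroup generated. -/
noncomputable abbrev TW : AddSubgroup L := AddSubgroup.closure genSet

lemma smul_single (z : ℤ) (p : ℤ) (A : M3) :
    z • (AddMonoidAlgebra.single p A : L) = AddMonoidAlgebra.single p (z • A) :=
  AddMonoidAlgebra.smul_single z p A

lemma single_mul (p q : ℤ) (A B : M3) :
    (AddMonoidAlgebra.single p A : L) * AddMonoidAlgebra.single q B
      = AddMonoidAlgebra.single (p+q) (A*B) :=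
  AddMonoidAlgebra.single_mul_single _ _ _ _

lemma single_neg' (p : ℤ) (A : M3) :
    (AddMonoidAlgebra.single p (-A) : L) = -AddMonoidAlgebra.single p A :=
  AddMonoidAlgebra.single_neg p A

lemma single_coeff (p : ℤ) (A : M3) (k : ℤ) :
    (AddMonoidAlgebra.single p A : L).coeff k = if p = k then A else 0 := by
  rw [AddMonoidAlgebra.coeff_single, Finsupp.single_apply]

/-- Each generator is twin. -/
lemma isTwin_gen : ∀ x ∈ genSet, IsTwin x := by
  rintro x ⟨n, h | h | h⟩ <;> subst h
  · refine ⟨fun j => if j = 3*n then 1 else 0, 0, 0, 0, ?_, ?_, ?_, fun j => rfl⟩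
    · intro j hj
      rw [Eg, single_coeff]
      by_cases h : j = 3*n
      · subst h; simp
      · have h' : ¬(3*n = j) := fun e => h e.symm
        simp [h, h']
    · intro j hj; rw [Eg, single_coeff, if_neg (by omega)]; simp
    · intro j hj; rw [Eg, single_coeff, if_neg (by omega)]; simp
  · refine ⟨0, fun j => if j = 3*n then 1 else 0, 0, 0, ?_, ?_, ?_, fun j => rfl⟩
    · intro j hj
      rw [Fg, single_coeff]
      by_cases h : j = 3*n
      · subst h; simp [Rm]
      · have h' : ¬(3*n = j) := fun e => h e.symm
        simp [h, h']
    · intro j hj; rw [Fg, single_coeff, if_neg (by omega)]; simp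
    · intro j hj; rw [Fg, single_coeff, if_neg (by omega)]; simp
  · refine ⟨0, 0, fun j => if j = 3*n+1 then 1 else 0, fun j => if j = 3*n+2 then 1 else 0,
      ?_, ?_, ?_, ?_⟩
    · intro j hj
      have hG : (Gg n).coeff j = 0 := by
        show (AddMonoidAlgebra.single (3*n+1) Pm : L).coeff j
          + (AddMonoidAlgebra.single (3*n+2) Qm : L).coeff j = 0
        rw [single_coeff, single_coeff, if_neg (by omega), if_neg (by omega), add_zero]
      rw [hG]; simp
    · intro j hj
      have hG : (Gg n).coeff j = (AddMonoidAlgebra.single (3*n+1) Pm : L).coeff j := by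
        show (AddMonoidAlgebra.single (3*n+1) Pm : L).coeff j
          + (AddMonoidAlgebra.single (3*n+2) Qm : L).coeff j = _
        rw [single_coeff (3*n+2), if_neg (by omega), add_zero]
      rw [hG, single_coeff]
      by_cases h : j = 3*n+1
      · subst h; simp [Pm]
      · have h' : ¬(3*n+1 = j) := fun e => h e.symm
        simp [h, h']
    · intro j hj
      have hG : (Gg n).coeff j = (AddMonoidAlgebra.single (3*n+2) Qm : L).coeff j := by
        show (AddMonoidAlgebra.single (3*n+1) Pm : L).coeff j
          + (AddMonoidAlgebra.single (3*n+2) Qm : L).coeff j = _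
        rw [single_coeff (3*n+1), if_neg (by omega), zero_add]
      rw [hG, single_coeff]
      by_cases h : j = 3*n+2
      · subst h; simp [Qm]
      · have h' : ¬(3*n+2 = j) := fun e => h e.symm
        simp [h, h']
    · intro j
      by_cases h : j = n
      · subst h; simp
      · have h1 : ¬(3*j+1 = 3*n+1) := by omega
        have h2 : ¬(3*j+2 = 3*n+2) := by omega
        simp [h1, h2]

lemma isTwin_zero : IsTwin 0 := by
  refine ⟨0, 0, 0, 0, ?_, ?_, ?_, fun j => rfl⟩ <;> intro j _ <;> simp

lemma isTwin_add {f g : L} (hf : IsTwin f) (hg : IsTwin g) : IsTwin (f + g) := by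
  obtain ⟨c1, c1', a1, b1, h10, h11, h12, h1c⟩ := hf
  obtain ⟨c2, c2', a2, b2, h20, h21, h22, h2c⟩ := hg
  refine ⟨c1 + c2, c1' + c2', a1 + a2, b1 + b2, ?_, ?_, ?_, ?_⟩
  · intro j hj
    have : (f + g).coeff j = f.coeff j + g.coeff j := rfl
    rw [this, h10 j hj, h20 j hj]
    simp only [Pi.add_apply, add_smul]; abel
  · intro j hj
    have : (f + g).coeff j = f.coeff j + g.coeff j := rfl
    rw [this, h11 j hj, h21 j hj]
    simp only [Pi.add_apply, add_smul]
  · intro j hj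
    have : (f + g).coeff j = f.coeff j + g.coeff j := rfl
    rw [this, h12 j hj, h22 j hj]
    simp only [Pi.add_apply, add_smul]
  · intro j; simp only [Pi.add_apply, h1c j, h2c j]

lemma isTwin_neg {f : L} (hf : IsTwin f) : IsTwin (-f) := by
  obtain ⟨c, c', a, b, h0, h1, h2, hc⟩ := hf
  refine ⟨-c, -c', -a, -b, ?_, ?_, ?_, ?_⟩
  · intro j hj
    have : (-f).coeff j = -(f.coeff j) := rfl
    rw [this, h0 j hj]
    simp only [Pi.neg_apply, neg_smul]; abel
  · intro j hj
    have : (-f).coeff j = -(f.coeff j) := rfl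
    rw [this, h1 j hj]
    simp only [Pi.neg_apply, neg_smul]
  · intro j hj
    have : (-f).coeff j = -(f.coeff j) := rfl
    rw [this, h2 j hj]
    simp only [Pi.neg_apply, neg_smul]
  · intro j; simp only [Pi.neg_apply, hc j]

/-- Backward direction: members of the closure are twin. -/
lemma isTwin_of_mem {f : L} (hf : f ∈ TW) : IsTwin f := by
  induction hf using AddSubgroup.closure_induction with
  | mem x hx => exact isTwin_gen x hx
  | zero => exact isTwin_zero
  | add x y _ _ hx hy => exact isTwin_add hx hy
  | neg x _ hx => exact isTwin_neg hx

/-- Forward direction: twin polynomials lie in the closure. -/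
lemma mem_of_isTwin {f : L} (hf : IsTwin f) : f ∈ TW := by
  obtain ⟨c, c', a, b, h0, h1, h2, hc⟩ := hf
  set N : Finset ℤ := f.coeff.support.image (fun j => j / 3) with hN
  have key : f = ∑ n ∈ N, (c (3*n) • Eg n + c' (3*n) • Fg n + a (3*n+1) • Gg n) := by
    refine LaurentPolynomial.ext fun k => ?_
    rw [AddMonoidAlgebra.coeff_sum, Finsupp.finset_sum_apply]
    have hterm : ∀ n : ℤ, (c (3*n) • Eg n + c' (3*n) • Fg n + a (3*n+1) • Gg n).coeff k
        = (if 3*n = k then c k • (1:M3) + c' k • Rm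
           else if 3*n+1 = k then a k • Pm
           else if 3*n+2 = k then b k • Qm else 0) := by
      intro n
      have expand : (c (3*n) • Eg n + c' (3*n) • Fg n + a (3*n+1) • Gg n).coeff k
          = c (3*n) • ((AddMonoidAlgebra.single (3*n) (1:M3) : L).coeff k)
            + c' (3*n) • ((AddMonoidAlgebra.single (3*n) Rm : L).coeff k)
            + a (3*n+1) • ((AddMonoidAlgebra.single (3*n+1) Pm : L).coeff k)
            + a (3*n+1) • ((AddMonoidAlgebra.single (3*n+2) Qm : L).coeff k) := by
        show c (3*n) • (Eg n).coeff k + c' (3*n) • (Fg n).coeff k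
            + (a (3*n+1) • ((AddMonoidAlgebra.single (3*n+1) Pm : L).coeff k
              + (AddMonoidAlgebra.single (3*n+2) Qm : L).coeff k)) = _
        rw [smul_add, Eg, Fg]; abel
      rw [expand, single_coeff, single_coeff, single_coeff, single_coeff]
      by_cases e0 : 3*n = k
      · have t1 : ¬(3*n+1 = k) := by omega
        have t2 : ¬(3*n+2 = k) := by omega
        rw [if_pos e0, if_pos e0, if_pos e0, if_neg t1, if_neg t2, e0]
        simp
      · by_cases e1 : 3*n+1 = k
        · have t2 : ¬(3*n+2 = k) := by omega
          rw [if_neg e0, if_neg e0, if_neg e0, if_pos e1, if_pos e1, if_neg t2, e1]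
          simp
        · by_cases e2 : 3*n+2 = k
          · rw [if_neg e0, if_neg e0, if_neg e0, if_neg e1, if_neg e1, if_pos e2, if_pos e2,
              hc n, e2]
            simp
          · rw [if_neg e0, if_neg e0, if_neg e0, if_neg e1, if_neg e1, if_neg e2, if_neg e2]
            simp
    rw [Finset.sum_congr rfl (fun n _ => hterm n)]
    have hval : (if 3*(k/3) = k then c k • (1:M3) + c' k • Rm
        else if 3*(k/3)+1 = k then a k • Pm
        else if 3*(k/3)+2 = k then b k • Qm else 0) = f.coeff k := by
      have h3 : k % 3 = 0 ∨ k % 3 = 1 ∨ k % 3 = 2 := by omega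
      rcases h3 with h | h | h
      · rw [if_pos (show 3*(k/3) = k by omega), h0 k h]; rfl
      · rw [if_neg (show ¬(3*(k/3) = k) by omega),
          if_pos (show 3*(k/3)+1 = k by omega), h1 k h]; rfl
      · rw [if_neg (show ¬(3*(k/3) = k) by omega),
          if_neg (show ¬(3*(k/3)+1 = k) by omega),
          if_pos (show 3*(k/3)+2 = k by omega), h2 k h]; rfl
    rw [Finset.sum_eq_single (k/3)]
    · exact hval.symm
    · intro n _ hn
      rw [if_neg (by omega), if_neg (by omega), if_neg (by omega)]
    · intro hk
      have hfk : f.coeff k = 0 := by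
        by_contra hne
        exact hk (Finset.mem_image_of_mem _ (Finsupp.mem_support_iff.mpr hne))
      rw [hval, hfk]
  rw [key]
  refine AddSubgroup.sum_mem _ (fun n _ => ?_)
  refine add_mem (add_mem ?_ ?_) ?_
  · exact AddSubgroup.zsmul_mem _ (AddSubgroup.subset_closure
      (show Eg n ∈ genSet from ⟨n, Or.inl rfl⟩)) _
  · exact AddSubgroup.zsmul_mem _ (AddSubgroup.subset_closure
      (show Fg n ∈ genSet from ⟨n, Or.inr (Or.inl rfl)⟩)) _
  · exact AddSubgroup.zsmul_mem _ (AddSubgroup.subset_closure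
      (show Gg n ∈ genSet from ⟨n, Or.inr (Or.inr rfl)⟩)) _

lemma Eg_mem (n : ℤ) : Eg n ∈ TW :=
  AddSubgroup.subset_closure (show Eg n ∈ genSet from ⟨n, Or.inl rfl⟩)
lemma Fg_mem (n : ℤ) : Fg n ∈ TW :=
  AddSubgroup.subset_closure (show Fg n ∈ genSet from ⟨n, Or.inr (Or.inl rfl)⟩)
lemma Gg_mem (n : ℤ) : Gg n ∈ TW :=
  AddSubgroup.subset_closure (show Gg n ∈ genSet from ⟨n, Or.inr (Or.inr rfl)⟩)

/-- Products of generators. -/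
lemma gen_mul_gen : ∀ x ∈ genSet, ∀ y ∈ genSet, x * y ∈ TW := by
  rintro x ⟨m, hx | hx | hx⟩ y ⟨n, hy | hy | hy⟩ <;> subst hx <;> subst hy
  · have : Eg m * Eg n = Eg (m+n) := by
      rw [Eg, Eg, Eg, single_mul, one_mul]; congr 1; ring
    rw [this]; exact Eg_mem _
  · have : Eg m * Fg n = Fg (m+n) := by
      rw [Eg, Fg, Fg, single_mul, one_mul]; congr 1; ring
    rw [this]; exact Fg_mem _
  · have : Eg m * Gg n = Gg (m+n) := by
      rw [Eg, Gg, Gg, mul_add, single_mul, single_mul, one_mul, one_mul]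
      congr 2 <;> ring
    rw [this]; exact Gg_mem _
  · have : Fg m * Eg n = Fg (m+n) := by
      rw [Eg, Fg, Fg, single_mul, mul_one]; congr 1; ring
    rw [this]; exact Fg_mem _
  · have : Fg m * Fg n = Eg (m+n) := by
      rw [Fg, Fg, Eg, single_mul, hRR]; congr 1; ring
    rw [this]; exact Eg_mem _
  · have : Fg m * Gg n = -Gg (m+n) := by
      have i1 : 3*m + (3*n+1) = 3*(m+n)+1 := by ring
      have i2 : 3*m + (3*n+2) = 3*(m+n)+2 := by ring
      rw [Fg, Gg, Gg, mul_add, single_mul, single_mul, hRP, hRQ, i1, i2,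
        single_neg', single_neg', neg_add]
    rw [this]; exact neg_mem (Gg_mem _)
  · have : Gg m * Eg n = Gg (m+n) := by
      rw [Eg, Gg, Gg, add_mul, single_mul, single_mul, mul_one, mul_one]
      congr 2 <;> ring
    rw [this]; exact Gg_mem _
  · have : Gg m * Fg n = -Gg (m+n) := by
      have i1 : 3*m+1 + 3*n = 3*(m+n)+1 := by ring
      have i2 : 3*m+2 + 3*n = 3*(m+n)+2 := by ring
      rw [Fg, Gg, Gg, add_mul, single_mul, single_mul, hPR, hQR, i1, i2,
        single_neg', single_neg', neg_add]
    rw [this]; exact neg_mem (Gg_mem _)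
  · have : Gg m * Gg n = (2:ℤ) • Eg (m+n+1) + (-2:ℤ) • Fg (m+n+1) := by
      rw [Gg, Gg, add_mul, mul_add, mul_add, single_mul, single_mul, single_mul, single_mul,
        hPP, hQQ, AddMonoidAlgebra.single_zero, AddMonoidAlgebra.single_zero,
        zero_add, add_zero]
      have h1 : (3*m+1) + (3*n+2) = 3*(m+n+1) := by ring
      have h2 : (3*m+2) + (3*n+1) = 3*(m+n+1) := by ring
      rw [h1, h2, ← AddMonoidAlgebra.single_add, hPQQP, AddMonoidAlgebra.single_add,
        Eg, Fg, smul_single, smul_single]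
    rw [this]
    exact add_mem (AddSubgroup.zsmul_mem _ (Eg_mem _) _) (AddSubgroup.zsmul_mem _ (Fg_mem _) _)

lemma mul_mem_TW {f g : L} (hf : f ∈ TW) (hg : g ∈ TW) : f * g ∈ TW := by
  induction hf using AddSubgroup.closure_induction with
  | mem x hx =>
    induction hg using AddSubgroup.closure_induction with
    | mem y hy => exact gen_mul_gen x hx y hy
    | zero => rw [mul_zero]; exact zero_mem _
    | add y z _ _ hy hz => rw [mul_add]; exact add_mem hy hz
    | neg y _ hy =>
      have h : x * -y = -(x * y) := mul_neg x y
      rw [h]; exact neg_mem hy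
  | zero => rw [zero_mul]; exact zero_mem _
  | add x y _ _ hx hy => rw [add_mul]; exact add_mem hx hy
  | neg x _ hx =>
    have h : -x * g = -(x * g) := neg_mul x g
    rw [h]; exact neg_mem hx

lemma one_eq_Eg : (1 : L) = Eg 0 := by
  rw [Eg]
  show AddMonoidAlgebra.single 0 1 = _
  norm_num

/-- The set of twin Laurent polynomials is a subring of `L`: it contains `0` and `1`,
and is closed under addition, negation, and multiplication. -/
theorem stmt_6 :
    IsTwin 0 ∧ IsTwin 1 ∧
    (∀ f g : L, IsTwin f → IsTwin g → IsTwin (f + g)) ∧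
    (∀ f : L, IsTwin f → IsTwin (-f)) ∧
    (∀ f g : L, IsTwin f → IsTwin g → IsTwin (f * g)) := by
  refine ⟨isTwin_zero, ?_, fun f g hf hg => isTwin_add hf hg, fun f hf => isTwin_neg hf,
    fun f g hf hg => isTwin_of_mem (mul_mem_TW (mem_of_isTwin hf) (mem_of_isTwin hg))⟩
  rw [one_eq_Eg]
  exact isTwin_gen _ ⟨0, Or.inl rfl⟩
end

section
/- If f(t) is a twin Laurent polynomial, then for every integer m both f(t)·t^{3m} and f(t)·(XYX)·t^{3m} are twin Laurent polynomials. -/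
open LaurentPolynomial Finset

lemma coeff_mul_T (f : L) (n j : ℤ) : (f * T n : L).coeff j = f.coeff (j - n) := by
  rw [show (T n : L) = AddMonoidAlgebra.single n 1 from rfl, AddMonoidAlgebra.coeff_mul_single_apply, mul_one, ← sub_eq_add_neg]

lemma coeff_mul_C (f : L) (A : M3) (j : ℤ) : (f * C A : L).coeff j = f.coeff j * A := by
  rw [← single_eq_C, AddMonoidAlgebra.coeff_mul_single_apply, neg_zero, add_zero]

def Zm : M3 := Xm * Ym * Xm

lemma Zm_sq : Zm * Zm = 1 := by
  show Zm * Zm = (1 : Matrix (Fin 3) (Fin 3) ℤ)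
  ext i j
  fin_cases i <;> fin_cases j <;>
    simp [Zm, Xm, Ym, Matrix.mul_apply, Fin.sum_univ_three, Matrix.one_apply]

lemma XY_Zm : (Xm + Ym) * Zm = -(Xm + Ym) := by
  ext i j
  fin_cases i <;> fin_cases j <;>
    simp [Zm, Xm, Ym, Matrix.mul_apply, Fin.sum_univ_three]

lemma inv_Zm : (Xinv + Yinv) * Zm = -(Xinv + Yinv) := by
  ext i j
  fin_cases i <;> fin_cases j <;>
    simp [Zm, Xm, Ym, Xinv, Yinv, pow_two, Matrix.mul_apply, Fin.sum_univ_three]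

/-- If `f` is twin, then for every integer `m` both `f·t^{3m}` and `f·(XYX)·t^{3m}` are twin. -/
theorem stmt_7 (f : L) (hf : IsTwin f) (m : ℤ) :
    IsTwin (f * T (3 * m)) ∧ IsTwin (f * C (Xm * Ym * Xm) * T (3 * m)) := by
  obtain ⟨c, c', a, b, h0, h1, h2, hab⟩ := hf
  constructor
  · refine ⟨fun j => c (j - 3 * m), fun j => c' (j - 3 * m),
      fun j => a (j - 3 * m), fun j => b (j - 3 * m), ?_, ?_, ?_, ?_⟩
    · intro j hj; rw [coeff_mul_T]; exact h0 _ (by omega)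
    · intro j hj; rw [coeff_mul_T]; exact h1 _ (by omega)
    · intro j hj; rw [coeff_mul_T]; exact h2 _ (by omega)
    · intro j
      show a (3 * j + 1 - 3 * m) = b (3 * j + 2 - 3 * m)
      rw [show (3 * j + 1 - 3 * m) = 3 * (j - m) + 1 by ring,
        show (3 * j + 2 - 3 * m) = 3 * (j - m) + 2 by ring]
      exact hab _
  · refine ⟨fun j => c' (j - 3 * m), fun j => c (j - 3 * m),
      fun j => -a (j - 3 * m), fun j => -b (j - 3 * m), ?_, ?_, ?_, ?_⟩
    · intro j hj
      rw [coeff_mul_T, coeff_mul_C, h0 _ (by omega : (j - 3 * m) % 3 = 0)]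
      rw [add_mul, smul_mul_assoc, smul_mul_assoc, one_mul,
        show Xm * Ym * Xm = Zm from rfl, Zm_sq]
      rw [add_comm]
    · intro j hj
      rw [coeff_mul_T, coeff_mul_C, h1 _ (by omega : (j - 3 * m) % 3 = 1)]
      rw [smul_mul_assoc, show Xm * Ym * Xm = Zm from rfl, XY_Zm, smul_neg, neg_smul]
    · intro j hj
      rw [coeff_mul_T, coeff_mul_C, h2 _ (by omega : (j - 3 * m) % 3 = 2)]
      rw [smul_mul_assoc, show Xm * Ym * Xm = Zm from rfl, inv_Zm, smul_neg, neg_smul]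
    · intro j
      show -a (3 * j + 1 - 3 * m) = -b (3 * j + 2 - 3 * m)
      rw [show (3 * j + 1 - 3 * m) = 3 * (j - m) + 1 by ring,
        show (3 * j + 2 - 3 * m) = 3 * (j - m) + 2 by ring, hab]
end

section
/- For all integers m and ℓ, the product {(X+Y)t^{3m+1} + (X⁻¹+Y⁻¹)t^{3m+2}}·{(X+Y)t^{3ℓ+1} + (X⁻¹+Y⁻¹)t^{3ℓ+2}} is a twin Laurent polynomial. -/
open LaurentPolynomial Finset

lemma hA2 : Xm * Xm + Ym * Xm + (Xm * Ym + Ym * Ym) = (0 : M3) := by decide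

lemma hB2 : Xinv * Xinv + Yinv * Xinv + (Xinv * Yinv + Yinv * Yinv) = (0 : M3) := by decide

lemma hAB : (Xinv * Xm + Yinv * Xm + (Xinv * Ym + Yinv * Ym)) +
    (Xm * Xinv + Ym * Xinv + (Xm * Yinv + Ym * Yinv))
    = (2:ℤ) • (1 : M3) + (-2:ℤ) • (Xm * Ym * Xm) := by decide

/-- For all integers `m, ℓ`, the product
`{(X+Y)t^{3m+1} + (X⁻¹+Y⁻¹)t^{3m+2}}·{(X+Y)t^{3ℓ+1} + (X⁻¹+Y⁻¹)t^{3ℓ+2}}` is twin. -/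
theorem stmt_8 (m ℓ : ℤ) :
    IsTwin ((C (Xm + Ym) * T (3 * m + 1) + C (Xinv + Yinv) * T (3 * m + 2)) *
      (C (Xm + Ym) * T (3 * ℓ + 1) + C (Xinv + Yinv) * T (3 * ℓ + 2))) := by
  have key : ((C (Xm + Ym) * T (3 * m + 1) + C (Xinv + Yinv) * T (3 * m + 2)) *
      (C (Xm + Ym) * T (3 * ℓ + 1) + C (Xinv + Yinv) * T (3 * ℓ + 2)) : L) =
      AddMonoidAlgebra.single (3 * (m + ℓ) + 3) ((2:ℤ) • (1 : M3) + (-2:ℤ) • (Xm * Ym * Xm)) := by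
    simp only [← single_eq_C_mul_T, mul_add, add_mul,
      AddMonoidAlgebra.single_mul_single]
    rw [hA2, hB2]
    have e1 : 3 * m + 1 + (3 * ℓ + 2) = 3 * (m + ℓ) + 3 := by ring
    have e2 : 3 * m + 2 + (3 * ℓ + 1) = 3 * (m + ℓ) + 3 := by ring
    rw [e1, e2]
    simp only [AddMonoidAlgebra.single_zero, zero_add, add_zero]
    rw [← AddMonoidAlgebra.single_add, hAB]
    congr 1
    ring
  refine ⟨fun j => if j = 3 * (m + ℓ) + 3 then 2 else 0,
    fun j => if j = 3 * (m + ℓ) + 3 then -2 else 0, 0, 0, ?_, ?_, ?_, fun j => rfl⟩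
  · intro j _
    rw [key, AddMonoidAlgebra.coeff_single, Finsupp.single_apply]
    by_cases h : j = 3 * (m + ℓ) + 3
    · simp [h]
    · simp [h, Ne.symm h]
  · intro j hj
    have h : ¬ (3 * (m + ℓ) + 3 = j) := by omega
    rw [key, AddMonoidAlgebra.coeff_single, Finsupp.single_apply, if_neg h]
    simp
  · intro j hj
    have h : ¬ (3 * (m + ℓ) + 3 = j) := by omega
    rw [key, AddMonoidAlgebra.coeff_single, Finsupp.single_apply, if_neg h]
    simp
end

section
/- For every integer k ≥ 0, the Laurent polynomial Y⁻¹t⁻¹·(I − Yt)·Q_{−(3k+3)}(t)·Yt·(I − Xt) is twin. -/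
open LaurentPolynomial Finset

/-- `Q m = ∑_{i=0}^m (YX)^i t^{2i}` for `m ≥ 0` and
`Q (-m) = ∑_{i=1}^m (X⁻¹Y⁻¹)^i t^{-2i}` for `m ≥ 1`. -/
noncomputable def Q (m : ℤ) : L :=
  if 0 ≤ m then ∑ i ∈ Finset.range (m.toNat + 1), C ((Ym * Xm) ^ i) * T (2 * (i : ℤ))
  else ∑ i ∈ Finset.range (-m).toNat, C ((Xinv * Yinv) ^ (i + 1)) * T (-(2 * ((i : ℤ) + 1)))

/- ------------------- auxiliary material ------------------- -/

lemma CT_mul (M N : M3) (a b : ℤ) : (C M * T a) * (C N * T b) = C (M * N) * T (a + b) := by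
  rw [mul_assoc, ← mul_assoc (T a), T_mul, mul_assoc, ← T_add, ← mul_assoc, ← map_mul]

lemma hQ3 : Q (-3) = C (Xinv * Yinv) * T (-2) + C ((Xinv * Yinv) ^ 2) * T (-4)
    + C ((Xinv * Yinv) ^ 3) * T (-6) := by
  rw [Q, if_neg (by norm_num)]
  norm_num [show Int.toNat 3 = 3 from rfl, Finset.sum_range_succ]

lemma L_add_apply (f g : L) (j : ℤ) : (f + g : L).coeff j = f.coeff j + g.coeff j := rfl

lemma L_single_apply (e j : ℤ) (M : M3) : (AddMonoidAlgebra.single e M : L).coeff j = if e = j then M else 0 :=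
  Finsupp.single_apply

lemma T_mul_apply (n : ℤ) (f : L) (j : ℤ) : (T n * f : L).coeff j = f.coeff (j - n) := by
  have h : (T n : L) = AddMonoidAlgebra.single n 1 := by rw [single_eq_C_mul_T, map_one, one_mul]
  rw [h, AddMonoidAlgebra.coeff_single_mul_apply, one_mul, sub_eq_neg_add]

lemma one_sub (M : M3) : (1:L) - C M * T 1 = C (1:M3) * T 0 + C (-M) * T 1 := by
  rw [T_zero, mul_one, map_one, map_neg]
  noncomm_ring
  rw [smul_mul_assoc]

/-- the basic block: the `k = 0` sandwich. -/
noncomputable def S0 : L := C Yinv * T (-1) * (1 - C Ym * T 1) * Q (-3) * (C Ym * T 1) *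
      (1 - C Xm * T 1)

/-- coefficient function of the basic block -/
def bc (j : ℤ) : M3 :=
  if j = 0 ∨ j = -6 then 1
  else if j = -3 then (-2 : ℤ) • (Xm * Ym * Xm)
  else if j = -2 ∨ j = -5 then -(Xm + Ym)
  else if j = -1 ∨ j = -4 then -(Xinv + Yinv)
  else 0

lemma S0_apply (j : ℤ) : (S0 : L).coeff j = bc j := by
  rw [S0, hQ3, one_sub, one_sub]
  simp only [mul_add, add_mul, CT_mul]
  simp only [← single_eq_C_mul_T]
  simp only [L_add_apply, L_single_apply]
  norm_num
  by_cases h0 : j = 0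
  · subst h0; norm_num [bc]; decide
  by_cases h1 : j = -1
  · subst h1; norm_num [bc]; decide
  by_cases h2 : j = -2
  · subst h2; norm_num [bc]; decide
  by_cases h3 : j = -3
  · subst h3; norm_num [bc]; decide
  by_cases h4 : j = -4
  · subst h4; norm_num [bc]; decide
  by_cases h5 : j = -5
  · subst h5; norm_num [bc]; decide
  by_cases h6 : j = -6
  · subst h6; norm_num [bc]; decide
  simp only [if_neg (show ¬((0:ℤ) = j) by omega), if_neg (show ¬((-1:ℤ) = j) by omega),
    if_neg (show ¬((-2:ℤ) = j) by omega), if_neg (show ¬((-3:ℤ) = j) by omega),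
    if_neg (show ¬((-4:ℤ) = j) by omega), if_neg (show ¬((-5:ℤ) = j) by omega),
    if_neg (show ¬((-6:ℤ) = j) by omega), add_zero, zero_add]
  rw [bc]
  split_ifs <;> first | rfl | omega

lemma T_central (n : ℤ) (f g : L) : f * (T n * g) = T n * (f * g) := by
  rw [← mul_assoc, ← T_mul, mul_assoc]

lemma hApow (n : ℕ) : (Xinv * Yinv) ^ (3 * n) = 1 := by
  rw [pow_mul, show (Xinv * Yinv) ^ 3 = 1 by decide, one_pow]

lemma hQrec (k : ℕ) :
    Q (-(3 * ((k:ℤ)+1) + 3)) = Q (-(3 * (k:ℤ) + 3)) + T (-(6*(k:ℤ)+6)) * Q (-3) := by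
  rw [Q, if_neg (by omega), Q, if_neg (by omega), hQ3]
  rw [show (-(-(3 * ((k:ℤ)+1) + 3))).toNat = 3*k+3+1+1+1 by omega,
      show (-(-(3 * ((k:ℤ)) + 3))).toNat = 3*k+3 by omega]
  rw [Finset.sum_range_succ, Finset.sum_range_succ, Finset.sum_range_succ]
  rw [show (Xinv*Yinv)^(3*k+3+1+1+1) = (Xinv*Yinv)^3 by
        rw [show 3*k+3+1+1+1 = 3*(k+1)+3 by ring, pow_add, hApow, one_mul],
      show (Xinv*Yinv)^(3*k+3+1+1) = (Xinv*Yinv)^2 by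
        rw [show 3*k+3+1+1 = 3*(k+1)+2 by ring, pow_add, hApow, one_mul],
      show (Xinv*Yinv)^(3*k+3+1) = Xinv*Yinv by
        rw [show 3*k+3+1 = 3*(k+1)+1 by ring, pow_add, hApow, one_mul, pow_one]]
  rw [mul_add, mul_add]
  rw [T_mul, add_mul, add_mul, mul_T_assoc, mul_T_assoc, mul_T_assoc]
  push_cast
  ring_nf
  abel

lemma sandwich_split (u v w : L) (n : ℤ) (q1 q2 : L) :
    u * (q1 + T n * q2) * v * w = u * q1 * v * w + T n * (u * q2 * v * w) := by
  rw [mul_add, add_mul, add_mul]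
  congr 1
  rw [T_central, mul_assoc (T n), mul_assoc (T n)]

lemma F_apply (k : ℕ) (j : ℤ) :
    (C Yinv * T (-1) * (1 - C Ym * T 1) * Q (-(3 * (k:ℤ) + 3)) * (C Ym * T 1) *
      (1 - C Xm * T 1) : L).coeff j = ∑ i ∈ Finset.range (k+1), bc (j + 6*(i:ℤ)) := by
  induction k generalizing j with
  | zero =>
    rw [show (-(3 * ((0:ℕ):ℤ) + 3)) = -3 by norm_num]
    rw [show (C Yinv * T (-1) * (1 - C Ym * T 1) * Q (-3) * (C Ym * T 1) *
      (1 - C Xm * T 1) : L) = S0 from rfl]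
    rw [S0_apply]
    norm_num
  | succ k ih =>
    rw [show ((k+1 : ℕ):ℤ) = (k:ℤ)+1 by push_cast; ring, hQrec, sandwich_split]
    rw [L_add_apply, ih, T_mul_apply]
    rw [show (C Yinv * T (-1) * (1 - C Ym * T 1) * Q (-3) * (C Ym * T 1) *
      (1 - C Xm * T 1) : L) = S0 from rfl]
    rw [S0_apply]
    conv_rhs => rw [Finset.sum_range_succ]
    have h : j - -(6*(k:ℤ)+6) = j + 6*(((k+1):ℕ):ℤ) := by push_cast; ring
    rw [h]

lemma hbc0 (e : ℤ) (he : e % 3 = 0) :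
    bc e = (if e = 0 ∨ e = -6 then (1:ℤ) else 0) • (1:M3)
      + (if e = -3 then (-2:ℤ) else 0) • (Xm * Ym * Xm) := by
  rw [bc]
  split_ifs <;> first | decide | omega

lemma hbc1 (e : ℤ) (he : e % 3 = 1) :
    bc e = (if e = -2 ∨ e = -5 then (-1:ℤ) else 0) • (Xm + Ym) := by
  rw [bc]
  split_ifs <;> first | decide | omega

lemma hbc2 (e : ℤ) (he : e % 3 = 2) :
    bc e = (if e = -1 ∨ e = -4 then (-1:ℤ) else 0) • (Xinv + Yinv) := by
  rw [bc]
  split_ifs <;> first | decide | omega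

/-- For every `k ≥ 0`, `Y⁻¹t⁻¹·(I − Yt)·Q_{−(3k+3)}(t)·Yt·(I − Xt)` is twin. -/
theorem stmt_12 (k : ℕ) :
    IsTwin (C Yinv * T (-1) * (1 - C Ym * T 1) * Q (-(3 * k + 3)) * (C Ym * T 1) *
      (1 - C Xm * T 1)) := by
  refine ⟨fun j => ∑ i ∈ Finset.range (k+1),
      (if j + 6*(i:ℤ) = 0 ∨ j + 6*(i:ℤ) = -6 then (1:ℤ) else 0),
    fun j => ∑ i ∈ Finset.range (k+1), (if j + 6*(i:ℤ) = -3 then (-2:ℤ) else 0),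
    fun j => ∑ i ∈ Finset.range (k+1),
      (if j + 6*(i:ℤ) = -2 ∨ j + 6*(i:ℤ) = -5 then (-1:ℤ) else 0),
    fun j => ∑ i ∈ Finset.range (k+1),
      (if j + 6*(i:ℤ) = -1 ∨ j + 6*(i:ℤ) = -4 then (-1:ℤ) else 0), ?_, ?_, ?_, ?_⟩
  · intro j hj
    rw [F_apply, Finset.sum_smul, Finset.sum_smul, ← Finset.sum_add_distrib]
    refine Finset.sum_congr rfl fun i _ => ?_
    exact hbc0 _ (by omega)
  · intro j hj
    rw [F_apply, Finset.sum_smul]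
    refine Finset.sum_congr rfl fun i _ => ?_
    exact hbc1 _ (by omega)
  · intro j hj
    rw [F_apply, Finset.sum_smul]
    refine Finset.sum_congr rfl fun i _ => ?_
    exact hbc2 _ (by omega)
  · intro j
    refine Finset.sum_congr rfl fun i _ => ?_
    exact if_congr (by omega) rfl rfl
end

section
/- The following identity of Laurent polynomials with 3×3 integer matrix coefficients holds: Y⁻¹t⁻¹·{(I − Yt)·Q₁(t)·Yt + (YX)²·t⁴}·(I − Xt) = I − (X+Y)·t − (X⁻¹+Y⁻¹)·t² − XYX·t³. -/
open LaurentPolynomial Finset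

lemma CT_mul_CT (A B : M3) (m n : ℤ) : (C A * T m) * (C B * T n) = C (A*B) * T (m+n) := by
  rw [mul_assoc, T_mul m (C B * T n), ← mul_assoc, mul_assoc, mul_T_assoc, ← mul_assoc,
    ← map_mul, add_comm n m]
lemma CT_mul_C (A B : M3) (m : ℤ) : (C A * T m) * C B = C (A*B) * T m := by
  rw [mul_assoc, T_mul m (C B), ← mul_assoc, ← map_mul]
lemma C_mul_CT (A B : M3) (m : ℤ) : C A * (C B * T m) = C (A*B) * T m := by
  rw [← mul_assoc, ← map_mul]

lemma mh9 : Yinv * (Ym * (Ym * Xm) * Ym) * Xm = Xm * Ym * Xm * Xm := by decide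
lemma mh10 : Yinv * (Ym * Xm) ^ 2 * Xm = Xm * Ym * Xm * Xm := by decide
lemma mh8 : Yinv * (Ym * Xm * Ym) * Xm = Xm * Ym * Xm := by decide
lemma mh4 : Yinv * (Ym * (Ym * Xm) * Ym) = Xm * Ym * Xm := by decide
lemma mh5 : Yinv * (Ym * Xm) ^ 2 = Xm * Ym * Xm := by decide
lemma mhA2 : Yinv * (Ym * Xm * Ym) = -Xinv - Yinv - Yinv * (Ym * Ym) * Xm := by decide
lemma mh6 : Yinv * Ym * Xm = Xm := by decide
lemma mh2 : Yinv * (Ym * Ym) = Ym := by decide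
lemma mh1 : Yinv * Ym = 1 := by decide

/-- `Y⁻¹t⁻¹·{(I − Yt)·Q₁(t)·Yt + (YX)²·t⁴}·(I − Xt)
    = I − (X+Y)·t − (X⁻¹+Y⁻¹)·t² − XYX·t³`. -/
theorem stmt_13 :
    C Yinv * T (-1) *
      ((1 - C Ym * T 1) * Q 1 * (C Ym * T 1) + C ((Ym * Xm) ^ 2) * T 4) *
      (1 - C Xm * T 1)
    = 1 - C (Xm + Ym) * T 1 - C (Xinv + Yinv) * T 2 - C (Xm * Ym * Xm) * T 3 := by
  norm_num [Q, Finset.sum_range_succ]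
  simp only [← map_mul, ← map_pow, mul_add, add_mul, mul_sub, sub_mul, mul_one, one_mul, map_add,
    CT_mul_CT, CT_mul_C, C_mul_CT, mul_T_assoc, Int.reduceAdd, Int.reduceNeg, T_zero, mul_one]
  rw [mh9, mh10, mh8, mh4, mh5, mhA2, mh6, mh2, mh1, map_one]
  simp only [map_add, map_sub, map_neg, add_mul, sub_mul, neg_mul]
  abel_nf
  simp only [smul_mul_assoc]
  abel
end

section
/- Let f be a twin Laurent polynomial, regarded (via the canonical identification of Laurent polynomials with 3×3 matrix coefficients with 3×3 matrices of Laurent polynomials) as a 3×3 matrix over ℤ[t, t⁻¹]. Then the determinant of f is a Laurent polynomial in t³; that is, every exponent occurring in det f with nonzero coefficient is divisible by 3. -/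
open LaurentPolynomial Finset

/-- The canonical identification of a Laurent polynomial with 3×3 integer matrix
coefficients with a 3×3 matrix of integer Laurent polynomials. -/
noncomputable def toMat (f : L) : Matrix (Fin 3) (Fin 3) (LaurentPolynomial ℤ) :=
  Matrix.of fun i j => AddMonoidAlgebra.ofCoeff (Finsupp.mapRange (fun M : M3 => M i j) rfl f.coeff)

namespace TwinAux

noncomputable section

/-- A primitive cube root of unity in `ℂ`. -/
def ω : ℂ := Complex.exp (2 * Real.pi * Complex.I / 3)

lemma hprim : IsPrimitiveRoot ω 3 := Complex.isPrimitiveRoot_exp 3 (by norm_num)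

lemma hω3 : ω ^ 3 = 1 := hprim.pow_eq_one

lemma hω0 : ω ≠ 0 := hprim.ne_zero (by norm_num)

lemma hωsum : ω ^ 2 + ω + 1 = 0 := by
  have h1 : ω ≠ 1 := hprim.ne_one (by norm_num)
  have h : (ω - 1) * (ω ^ 2 + ω + 1) = 0 := by linear_combination hω3
  rcases mul_eq_zero.mp h with h | h
  · exact absurd (sub_eq_zero.mp h) h1
  · exact h

lemma ωzpow3 (k : ℤ) : ω ^ (3 * k) = 1 := by
  rw [zpow_mul, show (ω : ℂ) ^ (3 : ℤ) = 1 by exact_mod_cast hω3, one_zpow]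

lemma ωzpow_mod (n : ℤ) : ω ^ n = ω ^ (n % 3) := by
  conv_lhs => rw [show n = 3 * (n / 3) + n % 3 by omega]
  rw [zpow_add₀ hω0, ωzpow3, one_mul]

/-- The conjugating matrix. -/
def Vm : Matrix (Fin 3) (Fin 3) ℂ :=
  !![-1, -1 - 2*ω, 1 + 2*ω; -2 - ω, -ω, 2 + ω; -1 + ω, 1 - ω, 1 + ω]

/-- Cast a `ℤ` matrix to a `ℂ` matrix. -/
def castM : M3 →+* Matrix (Fin 3) (Fin 3) ℂ := (Int.castRingHom ℂ).mapMatrix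

lemma castM_apply (M : M3) (i j : Fin 3) : castM M i j = (M i j : ℂ) := rfl

lemma Cm_eq : Xm * Ym * Xm = !![-1, 0, 0; -1, 0, 1; -1, 1, 0] := by
  simp [Xm, Ym]

lemma Am_eq : Xm + Ym = !![-1, 1, -1; -1, 1, -1; 0, 0, 0] := by
  simp [Xm, Ym]

lemma Bm_eq : Xinv + Yinv = !![-1, -1, 1; 0, 0, 0; -1, -1, 1] := by
  simp [Xinv, Yinv, Xm, Ym]
  decide

lemma castM_ofInt (a : Matrix (Fin 3) (Fin 3) ℤ) :
    castM a = a.map (fun x : ℤ => (x : ℂ)) := rfl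

lemma key0 : Vm * castM (Xm * Ym * Xm) = castM (Xm * Ym * Xm) * Vm := by
  rw [Cm_eq, castM_ofInt]
  ext i j
  fin_cases i <;> fin_cases j <;>
    simp [Vm, Matrix.mul_apply, Fin.sum_univ_three, Matrix.map_apply] <;> ring

lemma hsq : ω ^ 2 = -ω - 1 := by linear_combination hωsum

lemma key1 : Vm * castM (Xm + Ym) = ω • (castM (Xm + Ym) * Vm) := by
  rw [Am_eq, castM_ofInt]
  ext i j
  fin_cases i <;> fin_cases j <;>
    simp [Vm, Matrix.mul_apply, Fin.sum_univ_three, Matrix.map_apply] <;>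
    (try ring_nf) <;> (try simp only [hω3, hsq]) <;> (try ring_nf) <;> (try ring)

lemma key2 : Vm * castM (Xinv + Yinv) = (ω ^ 2) • (castM (Xinv + Yinv) * Vm) := by
  rw [Bm_eq, castM_ofInt]
  ext i j
  fin_cases i <;> fin_cases j <;>
    simp [Vm, Matrix.mul_apply, Fin.sum_univ_three, Matrix.map_apply] <;>
    (try ring_nf) <;> (try simp only [hω3, hsq]) <;> (try ring_nf) <;> (try ring)

lemma detVm : Vm.det = 8 := by
  simp [Vm, Matrix.det_fin_three]
  linear_combination (-8 : ℂ) * hωsum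

/-- The key pointwise conjugation identity. -/
lemma conj_coeff (f : L) (hf : IsTwin f) (n : ℤ) :
    Vm * castM (f.coeff n) = ω ^ n • (castM (f.coeff n) * Vm) := by
  obtain ⟨c, c', a, b, h0, h1, h2, -⟩ := hf
  have h3 : n % 3 = 0 ∨ n % 3 = 1 ∨ n % 3 = 2 := by omega
  rcases h3 with h | h | h
  · rw [h0 n h, ωzpow_mod, h, zpow_zero, one_smul]
    rw [map_add, map_zsmul, map_zsmul, map_one]
    rw [Matrix.mul_add, Matrix.add_mul, Matrix.mul_smul, Matrix.smul_mul,
      Matrix.mul_smul, Matrix.smul_mul, Matrix.mul_one, Matrix.one_mul, key0]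
  · rw [h1 n h, ωzpow_mod, h, zpow_one]
    rw [map_zsmul, Matrix.mul_smul, Matrix.smul_mul, key1, smul_comm]
  · rw [h2 n h, ωzpow_mod, h, show (ω : ℂ) ^ (2 : ℤ) = ω ^ 2 by
      rw [zpow_two, pow_two]]
    rw [map_zsmul, Matrix.mul_smul, Matrix.smul_mul, key2, smul_comm]

/-- The twisting ring homomorphism `ℤ[t,t⁻¹] → ℂ[t,t⁻¹]`, `t ↦ z t`. -/
def lift (z : ℂ) (hz : z ≠ 0) : LaurentPolynomial ℤ →+* LaurentPolynomial ℂ :=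
  AddMonoidAlgebra.liftNCRingHom
    ((LaurentPolynomial.C : ℂ →+* LaurentPolynomial ℂ).comp (Int.castRingHom ℂ))
    { toFun := fun n => C (z ^ (Multiplicative.toAdd n)) * T (Multiplicative.toAdd n)
      map_one' := by simp
      map_mul' := fun m n => by
        simp only [toAdd_mul]
        rw [zpow_add₀ hz, T_add, map_mul]
        ring }
    (fun _ _ => Commute.all _ _)

lemma lift_single (z : ℂ) (hz : z ≠ 0) (m : ℤ) (r : ℤ) :
    lift z hz (AddMonoidAlgebra.single m r) = AddMonoidAlgebra.single m ((r : ℂ) * z ^ m) := by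
  show AddMonoidAlgebra.liftNC _ _ (AddMonoidAlgebra.single m r) = _
  rw [AddMonoidAlgebra.liftNC_single]
  simp only [AddMonoidHom.coe_coe, RingHom.coe_comp, Function.comp_apply, MonoidHom.coe_mk,
    OneHom.coe_mk, toAdd_ofAdd, eq_intCast, single_eq_C_mul_T, map_intCast]
  rw [map_mul, show ((r : ℤ) : LaurentPolynomial ℂ) = C ((r : ℤ) : ℂ) from
    (map_intCast (C : ℂ →+* LaurentPolynomial ℂ) r).symm]
  ring

lemma lift_apply (z : ℂ) (hz : z ≠ 0) (q : LaurentPolynomial ℤ) (n : ℤ) :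
    (lift z hz q).coeff n = (q.coeff n : ℂ) * z ^ n := by
  induction q using AddMonoidAlgebra.induction with
  | zero => simp
  | single_add m r g hm hr ih =>
    rw [map_add, AddMonoidAlgebra.coeff_add, AddMonoidAlgebra.coeff_add, Finsupp.add_apply,
      Finsupp.add_apply, ih, lift_single, AddMonoidAlgebra.coeff_single,
      AddMonoidAlgebra.coeff_single, Finsupp.single_apply, Finsupp.single_apply]
    split_ifs with h
    · subst h; push_cast; ring
    · push_cast; ring

lemma toMat_coeff (f : L) (i j : Fin 3) (n : ℤ) : (toMat f i j).coeff n = (f.coeff n) i j := by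
  simp [toMat, Finsupp.mapRange_apply]
  rfl

/-- The main conjugation identity for matrices of Laurent polynomials. -/
lemma main_eq (f : L) (hf : IsTwin f) :
    (Vm.map C) * (toMat f).map (lift 1 one_ne_zero) =
      ((toMat f).map (lift ω hω0)) * (Vm.map C) := by
  ext i k n
  rw [Matrix.mul_apply, Matrix.mul_apply, AddMonoidAlgebra.coeff_sum, AddMonoidAlgebra.coeff_sum,
    Finset.sum_apply', Finset.sum_apply']
  have hL : ∀ j, ((Vm.map C) i j * ((toMat f).map (lift 1 one_ne_zero)) j k).coeff n
      = Vm i j * ((f.coeff n) j k : ℂ) := by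
    intro j
    rw [Matrix.map_apply, Matrix.map_apply, ← single_eq_C,
      AddMonoidAlgebra.coeff_single_zero_mul, lift_apply, toMat_coeff]
    simp
  have hR : ∀ j, (((toMat f).map (lift ω hω0)) i j * ((Vm.map C)) j k).coeff n
      = ω ^ n * (((f.coeff n) i j : ℂ) * Vm j k) := by
    intro j
    rw [Matrix.map_apply, Matrix.map_apply, ← single_eq_C,
      AddMonoidAlgebra.coeff_mul_single_zero, lift_apply, toMat_coeff]
    ring
  simp only [hL, hR, ← Finset.mul_sum]
  have := congrFun (congrFun (conj_coeff f hf n) i) k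
  rw [Matrix.smul_apply, Matrix.mul_apply, Matrix.mul_apply] at this
  simp only [castM_apply, smul_eq_mul] at this
  exact this

end

end TwinAux

open TwinAux in
/-- If `f` is a twin Laurent polynomial, regarded as a 3×3 matrix over `ℤ[t,t⁻¹]`, then its
determinant is a Laurent polynomial in `t³`: every exponent with nonzero coefficient is
divisible by 3. -/
theorem stmt_19 (f : L) (hf : IsTwin f) :
    ∀ n : ℤ, (toMat f).det.coeff n ≠ 0 → (3 : ℤ) ∣ n := by
  intro n hn
  set p := (toMat f).det with hp
  -- determinants of mapped matrices
  have hdet1 : ((toMat f).map (lift 1 one_ne_zero)).det = lift 1 one_ne_zero p :=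
    ((lift 1 one_ne_zero).map_det (toMat f)).symm
  have hdetω : ((toMat f).map (lift ω hω0)).det = lift ω hω0 p :=
    ((lift ω hω0).map_det (toMat f)).symm
  have hdetV : (Vm.map (C : ℂ →+* LaurentPolynomial ℂ)).det = C (Vm.det) :=
    ((C : ℂ →+* LaurentPolynomial ℂ).map_det Vm).symm
  have hVne : (Vm.map (C : ℂ →+* LaurentPolynomial ℂ)).det ≠ 0 := by
    rw [hdetV, detVm, ← single_eq_C]
    simp [Finsupp.single_eq_zero]
  have hmain := congrArg Matrix.det (main_eq f hf)
  rw [Matrix.det_mul, Matrix.det_mul, hdet1, hdetω] at hmain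
  have heq : lift 1 one_ne_zero p = lift ω hω0 p := by
    have h' : (Vm.map (C : ℂ →+* LaurentPolynomial ℂ)).det * lift 1 one_ne_zero p
        = (Vm.map (C : ℂ →+* LaurentPolynomial ℂ)).det * lift ω hω0 p := by
      rw [hmain]; ring
    exact mul_left_cancel₀ hVne h'
  have hcoeff := congrArg (fun q : LaurentPolynomial ℂ => q.coeff n) heq
  simp only [lift_apply, one_zpow, mul_one] at hcoeff
  -- hcoeff : (p n : ℂ) = (p n : ℂ) * ω ^ n
  have hpn : ((p.coeff n : ℤ) : ℂ) ≠ 0 := Int.cast_ne_zero.mpr hn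
  have hω1 : ω ^ n = 1 := by
    have := mul_left_cancel₀ hpn (hcoeff.symm.trans (mul_one _).symm)
    exact this
  have := (hprim.zpow_eq_one_iff_dvd n).mp hω1
  exact_mod_cast this
end
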